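/- Let m, n ≥ 2 be integers. The graph semiring of the disjoint union of m paths with n vertices each (the {0, ω}-direct union of m copies of S_{p_n}) is a homomorphic image of a subsemiring of the m-th direct power T^m, where T is the graph semiring of the disjoint union of two paths with n vertices each (S_{p_n} ∘ S_{p_n}). -/

import Mathlib

universe u v

-- The underlying set of the graph semiring of a graph with vertex set `V`:
-- the vertices together with two extra elements `0` and `ω`.
inductive GS (V : Type u) : Type u where
  | zero : GS V
  | omega : GS V
  | vert : V → GS V

-- Multiplication of the graph semiring: `x·y = ω` if `x, y` are vertices joined by an
-- edge, and `x·y = 0` otherwise.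
open Classical in
noncomputable def gsMul {V : Type u} (E : V → V → Prop) : GS V → GS V → GS V
  | GS.vert a, GS.vert b => if E a b then GS.omega else GS.zero
  | _, _ => GS.zero

-- The flat addition of the graph semiring: `a + b = a` if `a = b`, else `0`.
open Classical in
noncomputable def gsAdd {V : Type u} (a b : GS V) : GS V :=
  if a = b then a else GS.zero

-- `gsSum f n = f 0 + f 1 + ⋯ + f n` (a sum of `n + 1` terms).
noncomputable def gsSum {V : Type u} (f : ℕ → GS V) : ℕ → GS V
  | 0 => f 0
  | n + 1 => gsAdd (gsSum f n) (f (n + 1))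

-- `E` is a graph (in the sense of the paper): a directed graph with no isolated
-- vertices in which every vertex has out-degree at most 1 and in-degree at most 1.
def IsGraph {V : Type u} (E : V → V → Prop) : Prop :=
  (∀ v : V, ∃ u : V, E v u ∨ E u v) ∧
  (∀ v a b : V, E v a → E v b → a = b) ∧
  (∀ v a b : V, E a v → E b v → a = b)

-- `v 0, v 1, …, v (m - 1)` is a path of the graph `E` with `m` vertices.
def IsPathOn {V : Type u} (E : V → V → Prop) (m : ℕ) (v : ℕ → V) : Prop :=
  (∀ i < m, ∀ j < m, v i = v j → i = j) ∧
  (∀ i : ℕ, i + 1 < m → E (v i) (v (i + 1)))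

-- `v 0, v 1, …, v (m - 1)` is a cycle of the graph `E` of length `m`.
def IsCycleOn {V : Type u} (E : V → V → Prop) (m : ℕ) (v : ℕ → V) : Prop :=
  1 ≤ m ∧
  (∀ i < m, ∀ j < m, v i = v j → i = j) ∧
  (∀ i : ℕ, i + 1 < m → E (v i) (v (i + 1))) ∧
  E (v (m - 1)) (v 0)

-- `B` (with operations `addB`, `mulB`) is a homomorphic image of a subsemiring of `A`
-- (with operations `addA`, `mulA`): there is a subset of `A` closed under both
-- operations and a surjection from it onto `B` preserving both operations.
def IsHomImageOfSub {A : Type u} {B : Type v}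
    (addA mulA : A → A → A) (addB mulB : B → B → B) : Prop :=
  ∃ (T : Set A) (φ : A → B),
    (∀ x ∈ T, ∀ y ∈ T, addA x y ∈ T ∧ mulA x y ∈ T) ∧
    (∀ b : B, ∃ x ∈ T, φ x = b) ∧
    (∀ x ∈ T, ∀ y ∈ T,
      φ (addA x y) = addB (φ x) (φ y) ∧ φ (mulA x y) = mulB (φ x) (φ y))

-- The edge relation of the disjoint union of `k` paths with `n` vertices each,
-- the copies being indexed by `ι`.
def unionPathsE (ι : Type) (n : ℕ) : ι × Fin n → ι × Fin n → Prop :=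
  fun p q => p.1 = q.1 ∧ (q.2 : ℕ) = (p.2 : ℕ) + 1

section auxx
variable {m n : ℕ}

lemma gsMul_zero_left {V : Type u} (E : V → V → Prop) (y : GS V) :
    gsMul E GS.zero y = GS.zero := by cases y <;> rfl

lemma gsMul_omega_left {V : Type u} (E : V → V → Prop) (y : GS V) :
    gsMul E GS.omega y = GS.zero := by cases y <;> rfl

lemma gsMul_zero_right {V : Type u} (E : V → V → Prop) (x : GS V) :
    gsMul E x GS.zero = GS.zero := by cases x <;> rfl

lemma gsMul_omega_right {V : Type u} (E : V → V → Prop) (x : GS V) :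
    gsMul E x GS.omega = GS.zero := by cases x <;> rfl

open Classical in
lemma gsMul_vert {V : Type u} (E : V → V → Prop) (a b : V) :
    gsMul E (GS.vert a) (GS.vert b) = if E a b then GS.omega else GS.zero := rfl

lemma gsAdd_zero_left {V : Type u} (x : GS V) : gsAdd GS.zero x = GS.zero := by
  unfold gsAdd; split <;> rfl

lemma gsAdd_zero_right {V : Type u} (x : GS V) : gsAdd x GS.zero = GS.zero := by
  unfold gsAdd; split <;> simp_all

lemma gsAdd_self {V : Type u} (x : GS V) : gsAdd x x = x := by simp [gsAdd]

lemma gsAdd_ne {V : Type u} {x y : GS V} (h : x ≠ y) : gsAdd x y = GS.zero := by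
  simp [gsAdd, h]

noncomputable def enc (k : Fin m) (j : Fin n) : Fin m → GS (Bool × Fin n) :=
  fun i => GS.vert (decide (i = k), j)

lemma enc_inj {k k' : Fin m} {j j' : Fin n}
    (h : enc k j = enc k' j') : k = k' ∧ j = j' := by
  have h1 := congrFun h k
  simp only [enc, GS.vert.injEq, Prod.mk.injEq, decide_eq_decide] at h1
  exact ⟨h1.1.mp trivial, h1.2⟩

open Classical in
noncomputable def dec (f : Fin m → GS (Bool × Fin n)) : GS (Fin m × Fin n) :=
  if h : ∃ p : Fin m × Fin n, f = enc p.1 p.2 then GS.vert h.choose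
  else if f = (fun _ => GS.omega) then GS.omega else GS.zero

lemma dec_enc (k : Fin m) (j : Fin n) : dec (enc k j) = GS.vert (k, j) := by
  have h : ∃ p : Fin m × Fin n, enc k j = enc p.1 p.2 := ⟨(k, j), rfl⟩
  rw [dec, dif_pos h]
  obtain ⟨h1, h2⟩ := enc_inj h.choose_spec
  rw [show h.choose = (k, j) from Prod.ext h1.symm h2.symm]

lemma dec_omega (hm : 0 < m) : dec (fun _ : Fin m => (GS.omega : GS (Bool × Fin n))) = GS.omega := by
  rw [dec, dif_neg, if_pos rfl]
  rintro ⟨p, hp⟩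
  exact absurd (congrFun hp ⟨0, hm⟩) (by simp [enc])

lemma dec_zero {f : Fin m → GS (Bool × Fin n)} (hz : ∃ i, f i = GS.zero) :
    dec f = GS.zero := by
  obtain ⟨i, hi⟩ := hz
  rw [dec, dif_neg, if_neg]
  · intro hf; exact absurd ((congrFun hf i).symm.trans hi) (by simp)
  · rintro ⟨p, hp⟩
    exact absurd ((congrFun hp i).symm.trans hi) (by simp [enc])

end auxx

def TT (m n : ℕ) : Set (Fin m → GS (Bool × Fin n)) :=
  {f | (∃ p : Fin m × Fin n, f = enc p.1 p.2) ∨ f = (fun _ => GS.omega) ∨ ∃ i, f i = GS.zero}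

section main
variable {m n : ℕ}

lemma enc_injP {p q : Fin m × Fin n} (h : enc p.1 p.2 = enc q.1 q.2) : p = q :=
  Prod.ext (enc_inj h).1 (enc_inj h).2

lemma add_stuff (hm0 : 0 < m) {x y : Fin m → GS (Bool × Fin n)}
    (hx : x ∈ TT m n) (hy : y ∈ TT m n) :
    (fun i => gsAdd (x i) (y i)) ∈ TT m n ∧
    dec (fun i => gsAdd (x i) (y i)) = gsAdd (dec x) (dec y) := by
  rcases hx with ⟨p, rfl⟩ | rfl | ⟨i0, hi0⟩
  · rcases hy with ⟨q, rfl⟩ | rfl | ⟨i0, hi0⟩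
    · -- enc + enc
      by_cases hpq : p = q
      · subst hpq
        have he : (fun i => gsAdd (enc p.1 p.2 i) (enc p.1 p.2 i)) = enc p.1 p.2 := by
          funext i; exact gsAdd_self _
        refine ⟨Or.inl ⟨p, he⟩, ?_⟩
        rw [he, dec_enc, gsAdd_self]
      · have hne : enc p.1 p.2 ≠ enc q.1 q.2 := fun h => hpq (enc_injP h)
        obtain ⟨i0, hi0⟩ := Function.ne_iff.mp hne
        have hs : ∃ i, (fun i => gsAdd (enc p.1 p.2 i) (enc q.1 q.2 i)) i = GS.zero :=
          ⟨i0, gsAdd_ne hi0⟩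
        refine ⟨Or.inr (Or.inr hs), ?_⟩
        rw [dec_zero hs, dec_enc, dec_enc,
          gsAdd_ne (by simp [hpq])]
    · -- enc + ω
      have hs : ∃ i, (fun i => gsAdd (enc p.1 p.2 i) GS.omega) i = GS.zero :=
        ⟨⟨0, hm0⟩, gsAdd_ne (by simp [enc])⟩
      refine ⟨Or.inr (Or.inr hs), ?_⟩
      rw [dec_zero hs, dec_enc, dec_omega hm0, gsAdd_ne (by simp)]
    · -- enc + zero-coord
      have hs : ∃ i, (fun i => gsAdd (enc p.1 p.2 i) (y i)) i = GS.zero :=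
        ⟨i0, by simp [hi0, gsAdd_zero_right]⟩
      refine ⟨Or.inr (Or.inr hs), ?_⟩
      rw [dec_zero hs, dec_zero ⟨i0, hi0⟩, gsAdd_zero_right]
  · rcases hy with ⟨q, rfl⟩ | rfl | ⟨i0, hi0⟩
    · -- ω + enc
      have hs : ∃ i, (fun i => gsAdd (GS.omega : GS (Bool × Fin n)) (enc q.1 q.2 i)) i = GS.zero :=
        ⟨⟨0, hm0⟩, gsAdd_ne (by simp [enc])⟩
      refine ⟨Or.inr (Or.inr hs), ?_⟩
      rw [dec_zero hs, dec_omega hm0, dec_enc, gsAdd_ne (by simp)]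
    · -- ω + ω
      have he : (fun _ : Fin m => gsAdd (GS.omega : GS (Bool × Fin n)) GS.omega) =
          (fun _ => GS.omega) := by funext i; exact gsAdd_self _
      refine ⟨Or.inr (Or.inl he), ?_⟩
      rw [he, dec_omega hm0, gsAdd_self]
    · -- ω + zero-coord
      have hs : ∃ i, (fun i => gsAdd (GS.omega : GS (Bool × Fin n)) (y i)) i = GS.zero :=
        ⟨i0, by simp [hi0, gsAdd_zero_right]⟩
      refine ⟨Or.inr (Or.inr hs), ?_⟩
      rw [dec_zero hs, dec_zero ⟨i0, hi0⟩, gsAdd_zero_right]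
  · -- zero-coord + anything
    have hs : ∃ i, (fun i => gsAdd (x i) (y i)) i = GS.zero :=
      ⟨i0, by simp [hi0, gsAdd_zero_left]⟩
    refine ⟨Or.inr (Or.inr hs), ?_⟩
    rw [dec_zero hs, dec_zero ⟨i0, hi0⟩, gsAdd_zero_left]

lemma mul_stuff (hm0 : 0 < m) {x y : Fin m → GS (Bool × Fin n)}
    (hx : x ∈ TT m n) (hy : y ∈ TT m n) :
    (fun i => gsMul (unionPathsE Bool n) (x i) (y i)) ∈ TT m n ∧
    dec (fun i => gsMul (unionPathsE Bool n) (x i) (y i)) =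
      gsMul (unionPathsE (Fin m) n) (dec x) (dec y) := by
  rcases hx with ⟨p, rfl⟩ | rfl | ⟨i0, hi0⟩
  · rcases hy with ⟨q, rfl⟩ | rfl | ⟨i0, hi0⟩
    · -- enc * enc
      by_cases hc : p.1 = q.1 ∧ (q.2 : ℕ) = (p.2 : ℕ) + 1
      · have he : (fun i => gsMul (unionPathsE Bool n) (enc p.1 p.2 i) (enc q.1 q.2 i)) =
            (fun _ => GS.omega) := by
          funext i
          simp [enc, gsMul_vert, unionPathsE, hc.1, hc.2]
        refine ⟨Or.inr (Or.inl he), ?_⟩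
        rw [he, dec_omega hm0, dec_enc, dec_enc, gsMul_vert]
        simp [unionPathsE, hc.1, hc.2]
      · have hs : ∃ i, (fun i => gsMul (unionPathsE Bool n) (enc p.1 p.2 i) (enc q.1 q.2 i)) i
            = GS.zero := by
          by_cases hj : (q.2 : ℕ) = (p.2 : ℕ) + 1
          · have hk : p.1 ≠ q.1 := fun h => hc ⟨h, hj⟩
            exact ⟨p.1, by simp [enc, gsMul_vert, unionPathsE, hk]⟩
          · exact ⟨⟨0, hm0⟩, by simp [enc, gsMul_vert, unionPathsE, hj]⟩
        refine ⟨Or.inr (Or.inr hs), ?_⟩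
        rw [dec_zero hs, dec_enc, dec_enc, gsMul_vert]
        simp only [unionPathsE]
        exact (@if_neg _ (Classical.propDecidable _) hc _ _ _).symm
    · -- enc * ω
      have hs : ∃ i, (fun i => gsMul (unionPathsE Bool n) (enc p.1 p.2 i) GS.omega) i
          = GS.zero := ⟨⟨0, hm0⟩, gsMul_omega_right _ _⟩
      refine ⟨Or.inr (Or.inr hs), ?_⟩
      rw [dec_zero hs, dec_enc, dec_omega hm0, gsMul_omega_right]
    · -- enc * zero-coord
      have hs : ∃ i, (fun i => gsMul (unionPathsE Bool n) (enc p.1 p.2 i) (y i)) i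
          = GS.zero := ⟨i0, by simp [hi0, gsMul_zero_right]⟩
      refine ⟨Or.inr (Or.inr hs), ?_⟩
      rw [dec_zero hs, dec_zero ⟨i0, hi0⟩, gsMul_zero_right]
  · -- ω * anything
    have hs : ∃ i, (fun i => gsMul (unionPathsE Bool n) (GS.omega : GS (Bool × Fin n)) (y i)) i
        = GS.zero := ⟨⟨0, hm0⟩, gsMul_omega_left _ _⟩
    refine ⟨Or.inr (Or.inr hs), ?_⟩
    rw [dec_zero hs, dec_omega hm0, gsMul_omega_left]
  · -- zero-coord * anything
    have hs : ∃ i, (fun i => gsMul (unionPathsE Bool n) (x i) (y i)) i = GS.zero :=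
      ⟨i0, by simp [hi0, gsMul_zero_left]⟩
    refine ⟨Or.inr (Or.inr hs), ?_⟩
    rw [dec_zero hs, dec_zero ⟨i0, hi0⟩, gsMul_zero_left]

end main

/-- For `m, n ≥ 2`, the graph semiring of the disjoint union of `m` paths
with `n` vertices each (the `{0, ω}`-direct union of `m` copies of `S_{p_n}`) is a
homomorphic image of a subsemiring of `T^m`, where `T = S_{p_n} ∘ S_{p_n}` is the graph
semiring of the disjoint union of two paths with `n` vertices each. -/
theorem stmt_17 (m n : ℕ) (hm : 2 ≤ m) (hn : 2 ≤ n) :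
    IsHomImageOfSub
      (fun f g : Fin m → GS (Bool × Fin n) => fun i => gsAdd (f i) (g i))
      (fun f g : Fin m → GS (Bool × Fin n) =>
        fun i => gsMul (unionPathsE Bool n) (f i) (g i))
      (gsAdd : GS (Fin m × Fin n) → GS (Fin m × Fin n) → GS (Fin m × Fin n))
      (gsMul (unionPathsE (Fin m) n)) := by
  have hm0 : 0 < m := by omega
  refine ⟨TT m n, dec, ?_, ?_, ?_⟩
  · intro x hx y hy
    exact ⟨(add_stuff hm0 hx hy).1, (mul_stuff hm0 hx hy).1⟩
  · intro b
    cases b with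
    | zero => exact ⟨(fun _ => GS.zero), Or.inr (Or.inr ⟨⟨0, hm0⟩, rfl⟩), dec_zero ⟨⟨0, hm0⟩, rfl⟩⟩
    | omega => exact ⟨(fun _ => GS.omega), Or.inr (Or.inl rfl), dec_omega hm0⟩
    | vert p => exact ⟨enc p.1 p.2, Or.inl ⟨p, rfl⟩, by rw [dec_enc]⟩
  · intro x hx y hy
    exact ⟨(add_stuff hm0 hx hy).2, (mul_stuff hm0 hx hy).2⟩
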